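/- arXiv:1108.2526 — 2 statements merged into one kernel-verified Lean document; each statement's English description precedes it below -/
import Mathlib

section
/- Let α be a finite type, y a permutation of α, and q a natural number such that y^q is conjugate to y in the symmetric group of α. Let k be the number of distinct sizes of orbits of the cyclic group generated by y on α. Then ∑_{x : x·y·x⁻¹ = y^q} #{⟨y⟩-orbits O : x maps O onto O} = k · #{x ∈ Sym(α) : x·y·x⁻¹ = y^q}. In other words, the average number of ⟨y⟩-orbits preserved setwise by a uniformly random solution x of x·y·x⁻¹ = y^q equals the number of distinct ⟨y⟩-orbit sizes. -/
open Equiv MulAction Subgroup Function Finset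

section Aux

variable {α : Type*} [Fintype α]

attribute [local instance] Classical.propDecidable

private lemma mem_orbit_zpowers_iff' (y : Equiv.Perm α) (a b : α) :
    b ∈ orbit (zpowers y) a ↔ ∃ n : ℤ, (y ^ n) a = b := by
  rw [MulAction.mem_orbit_iff]
  constructor
  · rintro ⟨g, h⟩
    obtain ⟨n, hn⟩ := Subgroup.mem_zpowers_iff.mp g.2
    exact ⟨n, by rw [hn]; exact h⟩
  · rintro ⟨n, h⟩
    exact ⟨⟨y ^ n, Subgroup.mem_zpowers_iff.mpr ⟨n, rfl⟩⟩, h⟩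

private lemma transfer_eq {y : Equiv.Perm α} {b c : α}
    (h : ∀ n : ℤ, (y ^ n) b = b ↔ (y ^ n) c = c) {m n : ℤ}
    (hmn : (y ^ m) b = (y ^ n) b) : (y ^ m) c = (y ^ n) c := by
  have h1 : (y ^ (m - n)) b = b := by
    have h0 := congrArg (⇑(y ^ (-n))) hmn
    rw [← Equiv.Perm.mul_apply, ← Equiv.Perm.mul_apply, ← zpow_add, ← zpow_add] at h0
    rw [sub_eq_add_neg]; simpa [add_comm] using h0
  have h2 := (h _).mp h1
  have h3 := congrArg (⇑(y ^ n)) h2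
  rw [← Equiv.Perm.mul_apply, ← zpow_add] at h3
  simpa [add_sub_cancel] using h3

private noncomputable def halfMap (y : Equiv.Perm α) (a a' : α) (z : α) : α :=
  if h : z ∈ orbit (zpowers y) a then
    (y ^ Classical.choose ((mem_orbit_zpowers_iff' y a z).mp h)) a'
  else z

private lemma halfMap_spec {y : Equiv.Perm α} {a a' : α}
    (h : ∀ n : ℤ, (y ^ n) a = a ↔ (y ^ n) a' = a') {n : ℤ} {z : α}
    (hz : (y ^ n) a = z) : halfMap y a a' z = (y ^ n) a' := by
  have hz' : z ∈ orbit (zpowers y) a := (mem_orbit_zpowers_iff' y a z).mpr ⟨n, hz⟩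
  simp only [halfMap]
  rw [dif_pos hz']
  exact transfer_eq h ((Classical.choose_spec ((mem_orbit_zpowers_iff' y a z).mp hz')).trans hz.symm)

private lemma halfMap_of_not_mem {y : Equiv.Perm α} {a a' z : α}
    (h : z ∉ orbit (zpowers y) a) : halfMap y a a' z = z := by
  simp only [halfMap]
  rw [dif_neg h]

private noncomputable def cFun (y : Equiv.Perm α) (a a' : α) (z : α) : α :=
  if z ∈ orbit (zpowers y) a then halfMap y a a' z else halfMap y a' a z

private lemma apply_mem_orbit_iff {y : Equiv.Perm α} {a z : α} :
    y z ∈ orbit (zpowers y) a ↔ z ∈ orbit (zpowers y) a := by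
  rw [mem_orbit_zpowers_iff', mem_orbit_zpowers_iff']
  constructor
  · rintro ⟨n, hn⟩
    refine ⟨n - 1, ?_⟩
    have h0 := congrArg (⇑y⁻¹) hn
    rw [← Equiv.Perm.mul_apply y⁻¹ y, inv_mul_cancel, Equiv.Perm.one_apply, ← Equiv.Perm.mul_apply] at h0
    rw [← h0]
    congr 1
    group
  · rintro ⟨n, rfl⟩
    exact ⟨1 + n, by rw [zpow_one_add, Equiv.Perm.mul_apply]⟩

private lemma cFun_apply {y : Equiv.Perm α} {a a' : α}
    (h : ∀ n : ℤ, (y ^ n) a = a ↔ (y ^ n) a' = a') (n : ℤ) :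
    cFun y a a' ((y ^ n) a) = (y ^ n) a' := by
  simp only [cFun]
  rw [if_pos ((mem_orbit_zpowers_iff' y a _).mpr ⟨n, rfl⟩), halfMap_spec h rfl]

private lemma cFun_commute {y : Equiv.Perm α} {a a' : α}
    (h : ∀ n : ℤ, (y ^ n) a = a ↔ (y ^ n) a' = a') (z : α) :
    cFun y a a' (y z) = y (cFun y a a' z) := by
  by_cases hz : z ∈ orbit (zpowers y) a
  · obtain ⟨n, rfl⟩ := (mem_orbit_zpowers_iff' y a z).mp hz
    have h1 : y ((y ^ n) a) = (y ^ (1 + n)) a := by rw [zpow_one_add, Equiv.Perm.mul_apply]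
    rw [h1, cFun_apply h, cFun_apply h, zpow_one_add, Equiv.Perm.mul_apply]
  · have hyz : y z ∉ orbit (zpowers y) a := fun hc => hz (apply_mem_orbit_iff.mp hc)
    by_cases hz' : z ∈ orbit (zpowers y) a'
    · obtain ⟨n, rfl⟩ := (mem_orbit_zpowers_iff' y a' z).mp hz'
      have h' : ∀ n : ℤ, (y ^ n) a' = a' ↔ (y ^ n) a = a := fun n => (h n).symm
      have h1 : y ((y ^ n) a') = (y ^ (1 + n)) a' := by rw [zpow_one_add, Equiv.Perm.mul_apply]
      simp only [cFun]
      rw [h1, if_neg (h1 ▸ hyz), halfMap_spec h' rfl,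
        if_neg hz, halfMap_spec h' rfl, zpow_one_add, Equiv.Perm.mul_apply]
    · have hyz' : y z ∉ orbit (zpowers y) a' := fun hc => hz' (apply_mem_orbit_iff.mp hc)
      simp only [cFun]
      rw [if_neg hyz, halfMap_of_not_mem hyz', if_neg hz, halfMap_of_not_mem hz']

private lemma cFun_surjective {y : Equiv.Perm α} {a a' : α}
    (h : ∀ n : ℤ, (y ^ n) a = a ↔ (y ^ n) a' = a') :
    Function.Surjective (cFun y a a') := by
  intro w
  by_cases hw : w ∈ orbit (zpowers y) a'
  · obtain ⟨n, rfl⟩ := (mem_orbit_zpowers_iff' y a' w).mp hw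
    exact ⟨(y ^ n) a, cFun_apply h n⟩
  · by_cases hw' : w ∈ orbit (zpowers y) a
    · obtain ⟨n, rfl⟩ := (mem_orbit_zpowers_iff' y a w).mp hw'
      refine ⟨(y ^ n) a', ?_⟩
      have hmem : (y ^ n) a' ∉ orbit (zpowers y) a := by
        intro hc
        obtain ⟨m, hm⟩ := (mem_orbit_zpowers_iff' y a _).mp hc
        have ha' : a' ∈ orbit (zpowers y) a := by
          refine (mem_orbit_zpowers_iff' y a a').mpr ⟨m - n, ?_⟩
          have h0 := congrArg (⇑(y ^ (-n))) hm
          rw [← Equiv.Perm.mul_apply, ← Equiv.Perm.mul_apply, ← zpow_add, ← zpow_add] at h0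
          rw [sub_eq_add_neg]; simpa [add_comm] using h0
        have horb : orbit (zpowers y) a' = orbit (zpowers y) a :=
          MulAction.orbit_eq_iff.mpr ha'
        rw [← horb] at hw'
        exact hw hw'
      have h' : ∀ n : ℤ, (y ^ n) a' = a' ↔ (y ^ n) a = a := fun n => (h n).symm
      simp only [cFun]
      rw [if_neg hmem, halfMap_spec h' rfl]
    · refine ⟨w, ?_⟩
      simp only [cFun]
      rw [if_neg hw', halfMap_of_not_mem hw]

private lemma exists_commuting (y : Equiv.Perm α) {a a' : α}
    (h : ∀ n : ℤ, (y ^ n) a = a ↔ (y ^ n) a' = a') :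
    ∃ c : Equiv.Perm α, c * y = y * c ∧
      ⇑c '' orbit (zpowers y) a = orbit (zpowers y) a' := by
  have hbij : Function.Bijective (cFun y a a') :=
    Finite.surjective_iff_bijective.mp (cFun_surjective h)
  refine ⟨Equiv.ofBijective _ hbij, ?_, ?_⟩
  · ext z
    simp only [Equiv.Perm.mul_apply, Equiv.ofBijective_apply]
    exact cFun_commute h z
  · apply Set.Subset.antisymm
    · rintro w ⟨z, hz, rfl⟩
      obtain ⟨n, rfl⟩ := (mem_orbit_zpowers_iff' y a z).mp hz
      simp only [Equiv.ofBijective_apply]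
      rw [cFun_apply h]
      exact (mem_orbit_zpowers_iff' y a' _).mpr ⟨n, rfl⟩
    · intro w hw
      obtain ⟨n, rfl⟩ := (mem_orbit_zpowers_iff' y a' w).mp hw
      exact ⟨(y ^ n) a, (mem_orbit_zpowers_iff' y a _).mpr ⟨n, rfl⟩, cFun_apply h n⟩

private lemma semiconj_zpow {y x : Equiv.Perm α} {q : ℕ} (hx : x * y * x⁻¹ = y ^ q)
    (n : ℤ) (b : α) : x ((y ^ n) b) = ((y ^ q) ^ n) (x b) := by
  have h0 : SemiconjBy x y (y ^ q) := by
    rw [SemiconjBy, ← hx]; group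
  have h1 := h0.zpow_right n
  rw [SemiconjBy] at h1
  rw [← Equiv.Perm.mul_apply, h1, Equiv.Perm.mul_apply]

private lemma image_orbit {y x : Equiv.Perm α} {q : ℕ} (hx : x * y * x⁻¹ = y ^ q) (a : α) :
    ⇑x '' orbit (zpowers y) a = orbit (zpowers (y ^ q)) (x a) := by
  ext w
  simp only [Set.mem_image]
  rw [mem_orbit_zpowers_iff']
  constructor
  · rintro ⟨z, hz, rfl⟩
    obtain ⟨n, rfl⟩ := (mem_orbit_zpowers_iff' y a z).mp hz
    exact ⟨n, (semiconj_zpow hx n a).symm⟩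
  · rintro ⟨n, rfl⟩
    exact ⟨(y ^ n) a, (mem_orbit_zpowers_iff' y a _).mpr ⟨n, rfl⟩, semiconj_zpow hx n a⟩

private lemma orbit_pow_eq (y : Equiv.Perm α) (q : ℕ) (hconj : IsConj y (y ^ q)) (a : α) :
    orbit (zpowers (y ^ q)) a = orbit (zpowers y) a := by
  obtain ⟨c, hc⟩ := isConj_iff.mp hconj
  have hsub : ∀ b : α, orbit (zpowers (y ^ q)) b ⊆ orbit (zpowers y) b := by
    intro b w hw
    obtain ⟨n, hn⟩ := (mem_orbit_zpowers_iff' (y ^ q) b w).mp hw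
    refine (mem_orbit_zpowers_iff' y b w).mpr ⟨q * n, ?_⟩
    rwa [zpow_mul, zpow_natCast]
  refine Set.Subset.antisymm (hsub a) ?_
  let f : Quotient (orbitRel (zpowers (y ^ q)) α) → Quotient (orbitRel (zpowers y) α) :=
    Quotient.map' id (fun u v huv => by
      rw [MulAction.orbitRel_apply] at *
      exact hsub v huv)
  have hfs : Function.Surjective f := by
    intro w
    refine Quotient.inductionOn' w fun b => ⟨Quotient.mk'' b, ?_⟩
    simp [f, Quotient.map'_mk'']
  have hfi : Function.Injective f := by
    have key : ∀ u v : α, u ∈ orbit (zpowers y) v ↔ c u ∈ orbit (zpowers (y ^ q)) (c v) := by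
      intro u v
      rw [mem_orbit_zpowers_iff', mem_orbit_zpowers_iff']
      constructor
      · rintro ⟨n, rfl⟩
        exact ⟨n, (semiconj_zpow hc n v).symm⟩
      · rintro ⟨n, hn⟩
        refine ⟨n, c.injective ?_⟩
        rw [semiconj_zpow hc n v, hn]
    have e : Quotient (orbitRel (zpowers (y ^ q)) α) ≃ Quotient (orbitRel (zpowers y) α) := by
      refine (Quotient.congr (c : Equiv.Perm α) fun u v => ?_).symm
      rw [MulAction.orbitRel_apply, MulAction.orbitRel_apply]
      exact key u v
    exact (Finite.injective_iff_surjective_of_equiv e).mpr hfs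
  intro w hw
  have h1 : f (Quotient.mk'' w) = f (Quotient.mk'' a) := by
    show Quotient.map' id _ _ = Quotient.map' id _ _
    rw [Quotient.map'_mk'', Quotient.map'_mk'', id, id, Quotient.eq'',
      MulAction.orbitRel_apply]
    exact hw
  have h2 := hfi h1
  rw [Quotient.eq'', MulAction.orbitRel_apply] at h2
  exact h2

private lemma card_orbit_eq_period (y : Equiv.Perm α) (a : α) :
    Nat.card (orbit (zpowers y) a) = MulAction.period y a := by
  haveI : Fintype (orbit (zpowers y) a) := Fintype.ofFinite _
  rw [Nat.card_eq_fintype_card, MulAction.period_eq_minimalPeriod,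
    MulAction.minimalPeriod_eq_card]

private lemma period_fix_iff {y : Equiv.Perm α} {a a' : α}
    (h : MulAction.period y a = MulAction.period y a') (n : ℤ) :
    (y ^ n) a = a ↔ (y ^ n) a' = a' := by
  have h1 : ∀ b : α, (y ^ n) b = b ↔ y ^ n • b = b := fun b => Iff.rfl
  rw [h1, h1, MulAction.zpow_smul_eq_iff_period_dvd, MulAction.zpow_smul_eq_iff_period_dvd, h]

private lemma mul_mem_T {y c x : Equiv.Perm α} {q : ℕ} (hc : c * y = y * c)
    (hx : x * y * x⁻¹ = y ^ q) : (c * x) * y * (c * x)⁻¹ = y ^ q := by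
  have hcq : c * y ^ q = y ^ q * c := (Commute.pow_right hc q)
  calc (c * x) * y * (c * x)⁻¹ = c * (x * y * x⁻¹) * c⁻¹ := by group
  _ = c * y ^ q * c⁻¹ := by rw [hx]
  _ = y ^ q * c * c⁻¹ := by rw [hcq]
  _ = y ^ q := by group

end Aux

open scoped Classical in
theorem average_preserved_orbits_eq_number_of_distinct_orbit_sizes
    {α : Type*} [Fintype α] (y : Equiv.Perm α) (q : ℕ)
    (hconj : IsConj y (y ^ q))
    (k : ℕ)
    (hk : Nat.card (Set.range
      (fun ω : MulAction.orbitRel.Quotient (Subgroup.zpowers y) α =>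
        Nat.card ω.orbit)) = k) :
    ∑ x ∈ Finset.univ.filter (fun x : Equiv.Perm α => x * y * x⁻¹ = y ^ q),
        Nat.card {ω : MulAction.orbitRel.Quotient (Subgroup.zpowers y) α //
          (⇑x) '' ω.orbit = ω.orbit} =
      k * (Finset.univ.filter
        (fun x : Equiv.Perm α => x * y * x⁻¹ = y ^ q)).card := by
  classical
  haveI : Fintype (MulAction.orbitRel.Quotient (Subgroup.zpowers y) α) := Fintype.ofFinite _
  set Ω := MulAction.orbitRel.Quotient (Subgroup.zpowers y) α with hΩ
  set T : Finset (Equiv.Perm α) :=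
    Finset.univ.filter (fun x : Equiv.Perm α => x * y * x⁻¹ = y ^ q) with hTdef
  set s : Ω → ℕ := fun ω => Nat.card ω.orbit with hs
  have horbout : ∀ ω : Ω, ω.orbit = orbit (zpowers y) (Quotient.out ω) :=
    fun ω => MulAction.orbitRel.Quotient.orbit_eq_orbit_out ω Quotient.out_eq'
  have horb_inj : ∀ ω ω' : Ω, ω.orbit = ω'.orbit → ω = ω' := by
    intro ω ω' hh
    have h1 : Quotient.out ω ∈ MulAction.orbitRel.Quotient.orbit ω' := by
      rw [← hh, horbout]; exact MulAction.mem_orbit_self _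
    rw [MulAction.orbitRel.Quotient.mem_orbit] at h1
    rw [← h1]
    exact (Quotient.out_eq' ω).symm
  have himg : ∀ x ∈ T, ∀ ω : Ω,
      ⇑x '' ω.orbit = MulAction.orbitRel.Quotient.orbit
        (Quotient.mk'' (x (Quotient.out ω)) : Ω) := by
    intro x hx ω
    rw [hTdef, Finset.mem_filter] at hx
    rw [horbout, image_orbit hx.2, orbit_pow_eq y q hconj,
      MulAction.orbitRel.Quotient.orbit_mk]
  have hs_img : ∀ x ∈ T, ∀ ω : Ω, s (Quotient.mk'' (x (Quotient.out ω))) = s ω := by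
    intro x hx ω
    have h1 := himg x hx ω
    simp only [hs]
    rw [← h1, Nat.card_coe_set_eq, Nat.card_coe_set_eq,
      Set.ncard_image_of_injective _ x.injective]
  have key : ∀ ω₀ : Ω,
      ∑ ω ∈ Finset.univ.filter (fun ω : Ω => s ω = s ω₀),
        (T.filter (fun x : Equiv.Perm α => ⇑x '' ω.orbit = ω.orbit)).card = T.card := by
    intro ω₀
    set cls := Finset.univ.filter (fun ω : Ω => s ω = s ω₀) with hcls
    have hn0 : 0 < cls.card := Finset.card_pos.mpr ⟨ω₀, by simp [hcls]⟩
    have hconst : ∀ ω ω' : Ω, s ω' = s ω →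
        (T.filter (fun x : Equiv.Perm α => ⇑x '' ω.orbit = ω'.orbit)).card =
        (T.filter (fun x : Equiv.Perm α => ⇑x '' ω.orbit = ω.orbit)).card := by
      intro ω ω' hss
      have hper : MulAction.period y (Quotient.out ω') = MulAction.period y (Quotient.out ω) := by
        rw [← card_orbit_eq_period, ← card_orbit_eq_period, ← horbout, ← horbout]
        exact hss
      obtain ⟨c, hcy, hcimg⟩ := exists_commuting y (period_fix_iff hper)
      rw [← horbout, ← horbout] at hcimg
      have hcimg' : ⇑c⁻¹ '' MulAction.orbitRel.Quotient.orbit ω =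
          MulAction.orbitRel.Quotient.orbit ω' := by
        rw [← hcimg, ← Set.image_comp]
        simp [Function.comp_def]
      refine Finset.card_bij (fun x _ => c * x) ?_ ?_ ?_
      · intro x hx
        rw [Finset.mem_filter] at hx
        obtain ⟨hxT, hximg⟩ := hx
        rw [hTdef, Finset.mem_filter] at hxT
        rw [Finset.mem_filter]
        have hmemT : c * x ∈ T := by
          rw [hTdef, Finset.mem_filter]
          exact ⟨Finset.mem_univ _, mul_mem_T hcy hxT.2⟩
        refine ⟨hmemT, ?_⟩
        show ⇑(c * x) '' _ = _
        rw [Equiv.Perm.coe_mul, Set.image_comp, hximg, hcimg]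
      · intro x1 h1 x2 h2 hh
        exact mul_left_cancel hh
      · intro x' hx'
        rw [Finset.mem_filter] at hx'
        obtain ⟨hxT, hximg⟩ := hx'
        rw [hTdef, Finset.mem_filter] at hxT
        refine ⟨c⁻¹ * x', ?_, by group⟩
        rw [Finset.mem_filter]
        have hcy' : c⁻¹ * y = y * c⁻¹ := by
          have : Commute c y := hcy
          exact this.inv_left
        have hmemT : c⁻¹ * x' ∈ T := by
          rw [hTdef, Finset.mem_filter]
          exact ⟨Finset.mem_univ _, mul_mem_T hcy' hxT.2⟩
        refine ⟨hmemT, ?_⟩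
        show ⇑(c⁻¹ * x') '' _ = _
        rw [Equiv.Perm.coe_mul, Set.image_comp, hximg, hcimg']
    have hpart : ∀ ω ∈ cls,
        T.card = cls.card * (T.filter (fun x : Equiv.Perm α => ⇑x '' ω.orbit = ω.orbit)).card := by
      intro ω hω
      have hωs : s ω = s ω₀ := (Finset.mem_filter.mp hω).2
      have h1 : T.card = ∑ ω' ∈ cls,
          (T.filter (fun x : Equiv.Perm α => (Quotient.mk'' (x (Quotient.out ω)) : Ω) = ω')).card := by
        apply Finset.card_eq_sum_card_fiberwise
        intro x hx
        rw [Finset.mem_coe, hcls, Finset.mem_filter]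
        beta_reduce
        exact ⟨Finset.mem_univ _, by rw [hs_img x hx ω, hωs]⟩
      have h2 : ∀ ω' : Ω,
          (T.filter (fun x : Equiv.Perm α => (Quotient.mk'' (x (Quotient.out ω)) : Ω) = ω')).card =
          (T.filter (fun x : Equiv.Perm α => ⇑x '' ω.orbit = ω'.orbit)).card := by
        intro ω'
        congr 1
        apply Finset.filter_congr
        intro x hx
        constructor
        · rintro rfl
          exact himg x hx ω
        · intro hh
          apply horb_inj
          rw [← himg x hx ω, hh]
      rw [h1, Finset.sum_congr rfl fun ω' (hω' : ω' ∈ cls) => (h2 ω').trans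
        (hconst ω ω' (by rw [(Finset.mem_filter.mp hω').2, hωs]))]
      rw [Finset.sum_const, smul_eq_mul]
    have hsum : cls.card * (∑ ω ∈ cls, (T.filter (fun x : Equiv.Perm α => ⇑x '' ω.orbit = ω.orbit)).card)
        = cls.card * T.card := by
      rw [Finset.mul_sum]
      calc ∑ ω ∈ cls, cls.card * (T.filter (fun x : Equiv.Perm α => ⇑x '' ω.orbit = ω.orbit)).card
          = ∑ _ω ∈ cls, T.card := Finset.sum_congr rfl fun ω hω => (hpart ω hω).symm
      _ = cls.card * T.card := by rw [Finset.sum_const, smul_eq_mul]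
    exact Nat.eq_of_mul_eq_mul_left hn0 hsum
  have hfix : ∀ x : Equiv.Perm α,
      Nat.card {ω : Ω // ⇑x '' ω.orbit = ω.orbit} =
      (Finset.univ.filter (fun ω : Ω => ⇑x '' ω.orbit = ω.orbit)).card := by
    intro x
    rw [Nat.card_eq_fintype_card, Fintype.card_subtype]
  calc ∑ x ∈ T, Nat.card {ω : Ω // ⇑x '' ω.orbit = ω.orbit}
      = ∑ x ∈ T, (Finset.univ.filter (fun ω : Ω => ⇑x '' ω.orbit = ω.orbit)).card :=
        Finset.sum_congr rfl fun x _ => hfix x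
    _ = ∑ x ∈ T, ∑ ω : Ω, if ⇑x '' ω.orbit = ω.orbit then 1 else 0 :=
        Finset.sum_congr rfl fun x _ => Finset.card_filter _ _
    _ = ∑ ω : Ω, ∑ x ∈ T, if ⇑x '' ω.orbit = ω.orbit then 1 else 0 := Finset.sum_comm
    _ = ∑ ω : Ω, (T.filter (fun x : Equiv.Perm α => ⇑x '' ω.orbit = ω.orbit)).card :=
        Finset.sum_congr rfl fun ω _ => (Finset.card_filter _ _).symm
    _ = ∑ d ∈ Finset.univ.image s, ∑ ω ∈ Finset.univ.filter (fun ω : Ω => s ω = d),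
          (T.filter (fun x : Equiv.Perm α => ⇑x '' ω.orbit = ω.orbit)).card := by
        rw [Finset.sum_fiberwise_of_maps_to (fun ω _ => Finset.mem_image_of_mem s
          (Finset.mem_univ ω))]
    _ = ∑ d ∈ Finset.univ.image s, T.card := by
        apply Finset.sum_congr rfl
        intro d hd
        obtain ⟨ω₀, _, hω₀⟩ := Finset.mem_image.mp hd
        rw [show Finset.univ.filter (fun ω : Ω => s ω = d) =
          Finset.univ.filter (fun ω : Ω => s ω = s ω₀) by rw [hω₀], key ω₀]
    _ = (Finset.univ.image s).card * T.card := by rw [Finset.sum_const, smul_eq_mul]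
    _ = k * T.card := by
        congr 1
        rw [← hk]
        have hr : Set.range s = ↑(Finset.univ.image s) := by
          ext d; simp [Set.mem_range, eq_comm]
        rw [hr, Nat.card_coe_set_eq, Set.ncard_coe_finset]
end

section
/- Let α be a finite type, y a permutation of α, and q a natural number coprime to the order of y. Then y^q is conjugate to y in the symmetric group of α; equivalently, y^q has the same cycle type as y. -/
open Equiv Equiv.Perm

theorem cycleType_pow_coprime_aux {α : Type*} [Fintype α] [DecidableEq α]
    (y : Equiv.Perm α) (q : ℕ) (hq : Nat.Coprime q (orderOf y)) :
    (y ^ q).cycleType = y.cycleType := by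
  induction y using Equiv.Perm.cycle_induction_on with
  | base_one => simp
  | base_cycles c hc =>
    have hq' : ¬ orderOf c ∣ q := by
      intro hdvd
      have := Nat.Coprime.eq_one_of_dvd hq.symm hdvd
      exact hc.ne_one (orderOf_eq_one_iff.mp this)
    have hcyc : (c ^ q).IsCycle := hc.pow_iff.mpr hq
    have hsupp : (c ^ q).support = c.support := hc.support_pow_eq_iff.mpr hq'
    rw [hcyc.cycleType, hc.cycleType, hsupp]
  | induction_disjoint f g hd hf ihf ihg =>
    have hf' : Nat.Coprime q (orderOf f) :=
      Nat.Coprime.coprime_dvd_right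
        (by rw [hd.orderOf]; exact Nat.dvd_lcm_left _ _) hq
    have hg' : Nat.Coprime q (orderOf g) :=
      Nat.Coprime.coprime_dvd_right
        (by rw [hd.orderOf]; exact Nat.dvd_lcm_right _ _) hq
    rw [hd.commute.mul_pow, Equiv.Perm.Disjoint.cycleType_mul (hd.pow_disjoint_pow q q),
      hd.cycleType_mul, ihf hf', ihg hg']

theorem pow_coprime_orderOf_isConj
    {α : Type*} [Fintype α] [DecidableEq α] (y : Equiv.Perm α) (q : ℕ)
    (hq : Nat.Coprime q (orderOf y)) :
    IsConj y (y ^ q) ∧ (y ^ q).cycleType = y.cycleType := by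
  have h := cycleType_pow_coprime_aux y q hq
  exact ⟨Equiv.Perm.isConj_of_cycleType_eq h.symm, h⟩
end
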